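/- Let ℓ be an odd prime, V a 2-dimensional F_ℓ-vector space with nondegenerate alternating form ω, and S, S* a basis of V. Every non-diagonal Lagrangian subspace of V × V (with the product symplectic form) has a unique basis of the form {(S, aS + bS*), (S*, cS + dS*)} with a,b,c,d ∈ F_ℓ and ad − bc = −1; conversely every such quadruple determines a non-diagonal Lagrangian subspace. Hence non-diagonal Lagrangians are in bijection with {(a,b,c,d) ∈ F_ℓ^4 : ad − bc = −1}. -/
import Mathlib


/-- Non-diagonal Lagrangian subspaces of `V × V`, for `V` a `2`-dimensional symplectic
`F_ℓ`-space with symplectic basis `S, S*` (`ω(S,S*) = 1`), are in bijection with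
quadruples `(a,b,c,d) ∈ F_ℓ⁴` with `ad − bc = −1`, via the basis
`{(S, aS + bS*), (S*, cS + dS*)}` of the Lagrangian. -/
theorem nondiagonal_lagrangian_param (ℓ : ℕ) [Fact ℓ.Prime] (hodd : Odd ℓ)
    (V : Type*) [AddCommGroup V] [Module (ZMod ℓ) V]
    (hdim : Module.finrank (ZMod ℓ) V = 2)
    (ω : LinearMap.BilinForm (ZMod ℓ) V) (halt : ω.IsAlt) (hnd : ω.Nondegenerate)
    (S Sstar : V) (hSS : ω S Sstar = 1)
    (hspan : Submodule.span (ZMod ℓ) {S, Sstar} = ⊤)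
    (B : LinearMap.BilinForm (ZMod ℓ) (V × V))
    (hB : ∀ x y : V × V, B x y = ω x.1 y.1 + ω x.2 y.2) :
    ∀ K : Submodule (ZMod ℓ) (V × V),
      ((∀ x ∈ K, ∀ y ∈ K, B x y = 0) ∧ Module.finrank (ZMod ℓ) K = 2 ∧
        (∀ P : V, ((P, 0) : V × V) ∈ K → P = 0) ∧
        (∀ Q : V, ((0, Q) : V × V) ∈ K → Q = 0)) ↔
      ∃! q : ZMod ℓ × ZMod ℓ × ZMod ℓ × ZMod ℓ,
        q.1 * q.2.2.2 - q.2.1 * q.2.2.1 = -1 ∧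
        K = Submodule.span (ZMod ℓ)
          {(S, q.1 • S + q.2.1 • Sstar), (Sstar, q.2.2.1 • S + q.2.2.2 • Sstar)} := by
  classical
  intro K
  have hS0 : ω S S = 0 := halt S
  have hSs0 : ω Sstar Sstar = 0 := halt Sstar
  have hsS : ω Sstar S = -1 := by rw [← LinearMap.IsAlt.neg halt S Sstar, hSS]
  have hω : ∀ a b c d : ZMod ℓ,
      ω (a • S + b • Sstar) (c • S + d • Sstar) = a * d - b * c := by
    intro a b c d
    simp only [map_add, map_smul, LinearMap.add_apply, LinearMap.smul_apply,
      smul_eq_mul, hS0, hSs0, hSS, hsS]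
    ring
  have hindep : ∀ x y : ZMod ℓ, x • S + y • Sstar = 0 → x = 0 ∧ y = 0 := by
    intro x y h
    have h1 : ω (x • S + y • Sstar) Sstar = 0 := by rw [h]; simp
    have h2 : ω (x • S + y • Sstar) S = 0 := by rw [h]; simp
    simp only [map_add, map_smul, LinearMap.add_apply, LinearMap.smul_apply,
      smul_eq_mul, hS0, hSs0, hSS, hsS] at h1 h2
    constructor
    · linear_combination h1
    · linear_combination -h2
  have huniq : ∀ x y x' y' : ZMod ℓ,
      x • S + y • Sstar = x' • S + y' • Sstar → x = x' ∧ y = y' := by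
    intro x y x' y' h
    have h0 : (x - x') • S + (y - y') • Sstar = 0 := by
      rw [sub_smul, sub_smul]
      rw [show x • S - x' • S + (y • Sstar - y' • Sstar)
        = (x • S + y • Sstar) - (x' • S + y' • Sstar) by abel, h, sub_self]
    obtain ⟨h1, h2⟩ := hindep _ _ h0
    exact ⟨by linear_combination h1, by linear_combination h2⟩
  have hrepr : ∀ v : V, ∃ x y : ZMod ℓ, x • S + y • Sstar = v := by
    intro v
    exact Submodule.mem_span_pair.mp (hspan ▸ Submodule.mem_top)
  haveI : Module.Finite (ZMod ℓ) V :=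
    ⟨({S, Sstar} : Finset V), by simpa using hspan⟩
  have hpair : ∀ T T' : V, LinearIndependent (ZMod ℓ) ![((S, T) : V × V), (Sstar, T')] := by
    intro T T'
    rw [LinearIndependent.pair_iff]
    intro s t hst
    have h1 : s • S + t • Sstar = 0 := by
      have := congrArg Prod.fst hst
      simpa using this
    exact hindep s t h1
  have hspan2 : ∀ T T' : V, Module.finrank (ZMod ℓ)
      (Submodule.span (ZMod ℓ) {((S, T) : V × V), (Sstar, T')}) = 2 := by
    intro T T'
    have h := finrank_span_eq_card (hpair T T')
    have hr : Set.range ![((S, T) : V × V), (Sstar, T')] = {(S, T), (Sstar, T')} := by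
      simp [Matrix.range_cons, Matrix.range_empty, Set.pair_comm]
    rw [hr] at h
    simpa using h
  constructor
  · rintro ⟨hiso, hrank, hP, hQ⟩
    -- the first projection is injective on K, hence surjective
    have hinj : Function.Injective ((LinearMap.fst (ZMod ℓ) V V).comp K.subtype) := by
      intro x y h
      have hmem : (x : V × V) - y ∈ K := sub_mem x.2 y.2
      have h1 : (x : V × V).1 - (y : V × V).1 = 0 := by
        simpa using sub_eq_zero.mpr h
      have h2 : ((x : V × V) - y) = ((0 : V), (x : V × V).2 - (y : V × V).2) := by
        refine Prod.ext ?_ rfl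
        simpa using h1
      rw [h2] at hmem
      have := hQ _ hmem
      apply Subtype.ext
      apply Prod.ext
      · simpa using sub_eq_zero.mp h1
      · exact sub_eq_zero.mp this
    have hfst : Submodule.map (LinearMap.fst (ZMod ℓ) V V) K = ⊤ := by
      apply Submodule.eq_top_of_finrank_eq
      rw [hdim]
      have hr := LinearMap.finrank_range_of_inj hinj
      rw [LinearMap.range_comp, Submodule.range_subtype] at hr
      rw [hr, hrank]
    have key : ∀ v : V, ∃ T : V, ((v, T) : V × V) ∈ K := by
      intro v
      have hv : v ∈ Submodule.map (LinearMap.fst (ZMod ℓ) V V) K :=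
        hfst ▸ Submodule.mem_top
      obtain ⟨k, hk, hk1⟩ := hv
      exact ⟨k.2, by rwa [show (v, k.2) = k from Prod.ext hk1.symm rfl]⟩
    obtain ⟨T, hT⟩ := key S
    obtain ⟨T', hT'⟩ := key Sstar
    obtain ⟨a, b, hab⟩ := hrepr T
    obtain ⟨c, d, hcd⟩ := hrepr T'
    have hdet : a * d - b * c = -1 := by
      have h0 := hiso _ hT _ hT'
      rw [hB] at h0
      simp only at h0
      rw [← hab, ← hcd, hω, hSS] at h0
      linear_combination h0
    have hKeq : K = Submodule.span (ZMod ℓ)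
        {((S, a • S + b • Sstar) : V × V), (Sstar, c • S + d • Sstar)} := by
      have hle : Submodule.span (ZMod ℓ)
          {((S, a • S + b • Sstar) : V × V), (Sstar, c • S + d • Sstar)} ≤ K := by
        rw [Submodule.span_le]
        rintro x hx
        rcases hx with rfl | rfl
        · rw [hab]; exact hT
        · rw [hcd]; exact hT'
      exact (Submodule.eq_of_le_of_finrank_le hle (by rw [hspan2, hrank])).symm
    refine ⟨(a, b, c, d), ⟨hdet, hKeq⟩, ?_⟩
    rintro ⟨a', b', c', d'⟩ ⟨hdet', hK'⟩
    have hmem1 : ((S, a' • S + b' • Sstar) : V × V) ∈ K := by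
      rw [hK']
      exact Submodule.subset_span (Set.mem_insert _ _)
    have hmem2 : ((Sstar, c' • S + d' • Sstar) : V × V) ∈ K := by
      rw [hK']
      exact Submodule.subset_span (Set.mem_insert_of_mem _ rfl)
    have hd1 : ((0 : V), (a' • S + b' • Sstar) - T) ∈ K := by
      have := sub_mem hmem1 hT
      simpa using this
    have hd2 : ((0 : V), (c' • S + d' • Sstar) - T') ∈ K := by
      have := sub_mem hmem2 hT'
      simpa using this
    have he1 : a' • S + b' • Sstar = a • S + b • Sstar := by
      have := hQ _ hd1
      rw [sub_eq_zero] at this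
      rw [this, hab]
    have he2 : c' • S + d' • Sstar = c • S + d • Sstar := by
      have := hQ _ hd2
      rw [sub_eq_zero] at this
      rw [this, hcd]
    obtain ⟨ha, hb⟩ := huniq _ _ _ _ he1
    obtain ⟨hc, hd⟩ := huniq _ _ _ _ he2
    simp [ha, hb, hc, hd]
  · rintro ⟨⟨a, b, c, d⟩, ⟨hdet, hK⟩, -⟩
    subst hK
    set T := a • S + b • Sstar with hT
    set T' := c • S + d • Sstar with hT'
    have e11 : B (S, T) (S, T) = 0 := by
      rw [hB]; simp only; rw [halt, halt, add_zero]
    have e22 : B (Sstar, T') (Sstar, T') = 0 := by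
      rw [hB]; simp only; rw [halt, halt, add_zero]
    have e12 : B (S, T) (Sstar, T') = 0 := by
      rw [hB]; simp only; rw [hSS, hT, hT', hω]
      linear_combination hdet
    have e21 : B (Sstar, T') (S, T) = 0 := by
      rw [hB]; simp only; rw [hsS, hT, hT', hω]
      linear_combination -hdet
    refine ⟨?_, hspan2 T T', ?_, ?_⟩
    · intro x hx y hy
      obtain ⟨s, t, rfl⟩ := Submodule.mem_span_pair.mp hx
      obtain ⟨u, w, rfl⟩ := Submodule.mem_span_pair.mp hy
      simp only [map_add, map_smul, LinearMap.add_apply, LinearMap.smul_apply,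
        e11, e12, e21, e22, smul_zero, add_zero, zero_add, smul_eq_mul, mul_zero]
    · intro P hPm
      obtain ⟨s, t, hst⟩ := Submodule.mem_span_pair.mp hPm
      rw [Prod.mk.injEq] at hst
      obtain ⟨hst1, hst2⟩ := by
        simpa only [Prod.smul_mk, Prod.mk_add_mk, Prod.mk.injEq] using hst
      have h2 : (s * a + t * c) • S + (s * b + t * d) • Sstar = 0 := by
        rw [← hst2, hT, hT']
        simp only [smul_add, smul_smul, add_smul]
        abel
      obtain ⟨h3, h4⟩ := hindep _ _ h2
      have hs : s = 0 := by linear_combination (-d) * h3 + c * h4 + s * hdet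
      have ht : t = 0 := by linear_combination b * h3 - a * h4 + t * hdet
      rw [← hst1, hs, ht]
      simp
    · intro Q hQm
      obtain ⟨s, t, hst⟩ := Submodule.mem_span_pair.mp hQm
      obtain ⟨hst1, hst2⟩ := by
        simpa only [Prod.smul_mk, Prod.mk_add_mk, Prod.mk.injEq] using hst
      obtain ⟨hs, ht⟩ := hindep _ _ hst1
      rw [← hst2, hs, ht]
      simp
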